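/- Let θ > 0, let N ∈ ℕ and x ∈ ℝ. Then ∑_{n=0}^{N} ((N−n)+1)(4(x−n) − (N−n))/(2θ²) = (N+1)(N+2)(2x−N)/(2θ²). In particular, for non-integer x > 0 with N = ⌊x⌋, the solution of V(x) = V(x−1) + (⌊x⌋+1)(4x−⌊x⌋)/(2θ²) with V(y) = 0 for y ≤ 0 is V(x) = (⌊x⌋+1)(⌊x⌋+2)(2x−⌊x⌋)/(2θ²). -/

import Mathlib

lemma sum_part (θ : ℝ) (hθ : θ ≠ 0) : ∀ (N : ℕ) (x : ℝ),
    ∑ n ∈ Finset.range (N + 1),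
        (((N : ℝ) - (n : ℝ)) + 1) * (4 * (x - (n : ℝ)) - ((N : ℝ) - (n : ℝ))) / (2 * θ ^ 2)
      = ((N : ℝ) + 1) * ((N : ℝ) + 2) * (2 * x - (N : ℝ)) / (2 * θ ^ 2) := by
  intro N
  induction N with
  | zero => intro x; simp; ring_nf
  | succ N ih =>
    intro x
    rw [Finset.sum_range_succ']
    have h2 : ∀ n ∈ Finset.range (N + 1),
        (((N + 1 : ℕ) : ℝ) - ((n + 1 : ℕ) : ℝ) + 1) * (4 * (x - ((n + 1 : ℕ) : ℝ)) - (((N + 1 : ℕ) : ℝ) - ((n + 1 : ℕ) : ℝ))) / (2 * θ ^ 2)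
        = (((N : ℝ) - (n : ℝ)) + 1) * (4 * ((x - 1) - (n : ℝ)) - ((N : ℝ) - (n : ℝ))) / (2 * θ ^ 2) := by
      intro n _
      push_cast
      ring
    rw [Finset.sum_congr rfl h2, ih (x - 1)]
    have hθ2 : (2 * θ ^ 2) ≠ 0 := by positivity
    push_cast
    field_simp
    ring

theorem stmt_8 (θ : ℝ) (hθ : 0 < θ) :
    (∀ (N : ℕ) (x : ℝ),
      ∑ n ∈ Finset.range (N + 1),
          (((N : ℝ) - (n : ℝ)) + 1) * (4 * (x - (n : ℝ)) - ((N : ℝ) - (n : ℝ))) / (2 * θ ^ 2)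
        = ((N : ℝ) + 1) * ((N : ℝ) + 2) * (2 * x - (N : ℝ)) / (2 * θ ^ 2)) ∧
    (∀ V : ℝ → ℝ, (∀ y : ℝ, y ≤ 0 → V y = 0) →
      (∀ x : ℝ, 0 < x → (¬ ∃ n : ℤ, x = (n : ℝ)) →
        V x = V (x - 1) + ((⌊x⌋ : ℝ) + 1) * (4 * x - (⌊x⌋ : ℝ)) / (2 * θ ^ 2)) →
      ∀ x : ℝ, 0 < x → (¬ ∃ n : ℤ, x = (n : ℝ)) →
        V x = ((⌊x⌋ : ℝ) + 1) * ((⌊x⌋ : ℝ) + 2) * (2 * x - (⌊x⌋ : ℝ)) / (2 * θ ^ 2)) := by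
  constructor
  · exact sum_part θ hθ.ne'
  · intro V h0 hrec
    have key : ∀ (k : ℕ) (x : ℝ), 0 < x → (¬ ∃ n : ℤ, x = (n : ℝ)) → ⌊x⌋ = (k : ℤ) →
        V x = ((⌊x⌋ : ℝ) + 1) * ((⌊x⌋ : ℝ) + 2) * (2 * x - (⌊x⌋ : ℝ)) / (2 * θ ^ 2) := by
      intro k
      induction k with
      | zero =>
        intro x hx hni hf
        have hx1 : x < 1 := by
          have := Int.lt_floor_add_one x
          rw [hf] at this; simpa using this
        have := hrec x hx hni
        rw [h0 (x - 1) (by linarith)] at this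
        rw [this, hf]
        push_cast
        ring
      | succ k ih =>
        intro x hx hni hf
        have hge : ((k : ℝ) + 1) ≤ x := by
          have := Int.floor_le x
          rw [hf] at this
          push_cast at this
          linarith
        have hne : x ≠ (k : ℝ) + 1 := fun h => hni ⟨(k : ℤ) + 1, by push_cast; linarith⟩
        have hk0 : (0 : ℝ) ≤ (k : ℝ) := Nat.cast_nonneg k
        have hx1 : 1 < x := by
          have := lt_of_le_of_ne hge (Ne.symm hne)
          linarith
        have hni' : ¬ ∃ n : ℤ, x - 1 = (n : ℝ) := by
          rintro ⟨n, hn⟩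
          exact hni ⟨n + 1, by push_cast; linarith⟩
        have hf' : ⌊x - 1⌋ = (k : ℤ) := by
          rw [show x - 1 = x - (1 : ℤ) by push_cast; ring, Int.floor_sub_intCast, hf]
          push_cast; ring
        have := hrec x hx hni
        rw [ih (x - 1) (by linarith) hni' hf'] at this
        rw [this, hf, hf']
        have hθ2 : (2 * θ ^ 2) ≠ 0 := by positivity
        push_cast
        field_simp
        ring
    intro x hx hni
    have hfl : 0 ≤ ⌊x⌋ := Int.floor_nonneg.2 hx.le
    exact key ⌊x⌋.toNat x hx hni (by omega)
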